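/- Attainment of the Rockafellar–Uryasev infimum at the Value at Risk: let (Ω, ℱ, P) be a probability space, let X : Ω → ℝ be an integrable random variable, and let α ∈ (0,1). Then the infimum inf_{z ∈ ℝ} { z + (1/α) · E[(X − z)₊] } is attained at z* = VaR_{1-α}(X) := inf { z ∈ ℝ : P(X ≥ z) ≤ α }. -/

import Mathlib

open MeasureTheory Set Filter

/-- Value at Risk at level `1 - α`: `VaR_{1-α}(X) = inf { z : P(X ≥ z) ≤ α }`. -/
noncomputable def valueAtRisk {Ω : Type*} [MeasurableSpace Ω] (P : Measure Ω)
    (X : Ω → ℝ) (α : ℝ) : ℝ :=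
  sInf {z : ℝ | (P {ω | z ≤ X ω}).toReal ≤ α}

section aux

variable {Ω : Type*} [MeasurableSpace Ω] {P : Measure Ω} [IsProbabilityMeasure P]

private lemma RU_main (X : Ω → ℝ) (hm : Measurable X) (hX : Integrable X P)
    (α : ℝ) (hα : α ∈ Set.Ioo (0 : ℝ) 1) :
    valueAtRisk P X α + (1 / α) * ∫ ω, max (X ω - valueAtRisk P X α) 0 ∂P
      = sInf {v : ℝ | ∃ z : ℝ, v = z + (1 / α) * ∫ ω, max (X ω - z) 0 ∂P} := by
  obtain ⟨hα0, hα1⟩ := hα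
  set S : Set ℝ := {z : ℝ | (P {ω | z ≤ X ω}).toReal ≤ α} with hSdef
  have hmeas : ∀ z : ℝ, MeasurableSet {ω | z ≤ X ω} := fun z => hm measurableSet_Ici
  have hmono : ∀ {z w : ℝ}, z ≤ w → {ω | w ≤ X ω} ⊆ {ω | z ≤ X ω} :=
    fun hzw ω hω => le_trans hzw hω
  -- S is nonempty
  have hSne : S.Nonempty := by
    have hanti : Antitone fun n : ℕ => {ω | (n : ℝ) ≤ X ω} := fun n m hnm =>
      hmono (by exact_mod_cast hnm)
    have hiInter : (⋂ n : ℕ, {ω | (n : ℝ) ≤ X ω}) = ∅ := by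
      ext ω
      simp only [mem_iInter, mem_setOf_eq, mem_empty_iff_false, iff_false, not_forall, not_le]
      obtain ⟨n, hn⟩ := exists_nat_gt (X ω)
      exact ⟨n, hn⟩
    have htend : Tendsto (fun n : ℕ => P {ω | (n : ℝ) ≤ X ω}) atTop (nhds 0) := by
      have := tendsto_measure_iInter_atTop (μ := P)
        (s := fun n : ℕ => {ω | (n : ℝ) ≤ X ω})
        (fun n => (hmeas (n : ℝ)).nullMeasurableSet) hanti ⟨0, measure_ne_top P _⟩
      simp only [Function.comp_def] at this
      rwa [hiInter, measure_empty] at this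
    have hev := htend.eventually_lt_const (ENNReal.ofReal_pos.2 hα0)
    obtain ⟨n, hn⟩ := hev.exists
    refine ⟨(n : ℝ), ?_⟩
    simp only [hSdef, mem_setOf_eq]
    calc (P {ω | (n : ℝ) ≤ X ω}).toReal ≤ (ENNReal.ofReal α).toReal :=
          ENNReal.toReal_mono ENNReal.ofReal_ne_top hn.le
      _ = α := ENNReal.toReal_ofReal hα0.le
  -- S is bounded below
  have hSbdd : BddBelow S := by
    have hmon : Monotone fun n : ℕ => {ω | (-(n : ℝ)) ≤ X ω} := fun n m hnm =>
      hmono (by simp; exact_mod_cast hnm)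
    have hiUnion : (⋃ n : ℕ, {ω | (-(n : ℝ)) ≤ X ω}) = univ := by
      ext ω
      simp only [mem_iUnion, mem_setOf_eq, mem_univ, iff_true]
      obtain ⟨n, hn⟩ := exists_nat_gt (-(X ω))
      exact ⟨n, by linarith⟩
    have htend : Tendsto (fun n : ℕ => P {ω | (-(n : ℝ)) ≤ X ω}) atTop (nhds 1) := by
      have := tendsto_measure_iUnion_atTop (μ := P)
        (s := fun n : ℕ => {ω | (-(n : ℝ)) ≤ X ω}) hmon
      simp only [Function.comp_def] at this
      rwa [hiUnion, measure_univ] at this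
    have hev := htend.eventually_const_lt (ENNReal.ofReal_lt_one.2 hα1)
    obtain ⟨n, hn⟩ := hev.exists
    refine ⟨-(n : ℝ), fun z hz => ?_⟩
    by_contra hlt
    push_neg at hlt
    have hsub : P {ω | (-(n : ℝ)) ≤ X ω} ≤ P {ω | z ≤ X ω} := measure_mono (hmono hlt.le)
    have : α < (P {ω | z ≤ X ω}).toReal := by
      have := ENNReal.toReal_mono (measure_ne_top P _) (lt_of_lt_of_le hn hsub).le
      calc α = (ENNReal.ofReal α).toReal := (ENNReal.toReal_ofReal hα0.le).symm
        _ < (P {ω | (-(n : ℝ)) ≤ X ω}).toReal := by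
            refine (ENNReal.toReal_lt_toReal ENNReal.ofReal_ne_top (measure_ne_top P _)).2 hn
        _ ≤ (P {ω | z ≤ X ω}).toReal :=
            ENNReal.toReal_mono (measure_ne_top P _) hsub
    exact absurd hz (by simp only [hSdef, mem_setOf_eq]; linarith)
  have hvdef : valueAtRisk P X α = sInf S := rfl
  set v : ℝ := sInf S with hv
  -- anything below sInf S is not in S
  have hnotS : ∀ z : ℝ, z < v → α < (P {ω | z ≤ X ω}).toReal := by
    intro z hz
    by_contra h
    push_neg at h
    exact absurd (csInf_le hSbdd (by simpa [hSdef] using h)) (not_le.2 hz)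
  -- upward closure
  have hSup : ∀ z ∈ S, ∀ w : ℝ, z ≤ w → w ∈ S := by
    intro z hz w hzw
    simp only [hSdef, mem_setOf_eq] at hz ⊢
    exact le_trans (ENNReal.toReal_mono (measure_ne_top P _) (measure_mono (hmono hzw))) hz
  -- P(X ≥ v) ≥ α
  have h1 : α ≤ (P {ω | v ≤ X ω}).toReal := by
    have hanti : Antitone fun n : ℕ => {ω | v - 1 / (n + 1 : ℝ) ≤ X ω} := by
      intro n m hnm ω hω
      have h1 : (1 : ℝ) / (m + 1) ≤ 1 / (n + 1) := by
        apply one_div_le_one_div_of_le (by positivity)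
        exact_mod_cast Nat.succ_le_succ hnm
      simp only [mem_setOf_eq] at hω ⊢
      linarith
    have hiInter : (⋂ n : ℕ, {ω | v - 1 / (n + 1 : ℝ) ≤ X ω}) = {ω | v ≤ X ω} := by
      ext ω
      simp only [mem_iInter, mem_setOf_eq]
      constructor
      · intro h
        by_contra hlt
        push_neg at hlt
        obtain ⟨n, hn⟩ := exists_nat_one_div_lt (sub_pos.2 hlt)
        have := h n
        linarith
      · intro h n
        have : (0 : ℝ) < 1 / (n + 1) := by positivity
        linarith
    have htend : Tendsto (fun n : ℕ => P {ω | v - 1 / (n + 1 : ℝ) ≤ X ω}) atTop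
        (nhds (P {ω | v ≤ X ω})) := by
      have := tendsto_measure_iInter_atTop (μ := P)
        (s := fun n : ℕ => {ω | v - 1 / (n + 1 : ℝ) ≤ X ω})
        (fun n => (hmeas _).nullMeasurableSet) hanti ⟨0, measure_ne_top P _⟩
      simp only [Function.comp_def] at this
      rwa [hiInter] at this
    have hle : ENNReal.ofReal α ≤ P {ω | v ≤ X ω} := by
      refine ge_of_tendsto' htend fun n => ?_
      have hlt : v - 1 / (n + 1 : ℝ) < v := by
        have : (0 : ℝ) < 1 / (n + 1) := by positivity
        linarith
      exact ENNReal.ofReal_le_of_le_toReal (hnotS _ hlt).le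
    calc α = (ENNReal.ofReal α).toReal := (ENNReal.toReal_ofReal hα0.le).symm
      _ ≤ (P {ω | v ≤ X ω}).toReal :=
          ENNReal.toReal_mono (measure_ne_top P _) hle
  -- P(X > v) ≤ α
  have h2 : (P {ω | v < X ω}).toReal ≤ α := by
    have hmon : Monotone fun n : ℕ => {ω | v + 1 / (n + 1 : ℝ) ≤ X ω} := by
      intro n m hnm ω hω
      have h1 : (1 : ℝ) / (m + 1) ≤ 1 / (n + 1) := by
        apply one_div_le_one_div_of_le (by positivity)
        exact_mod_cast Nat.succ_le_succ hnm
      simp only [mem_setOf_eq] at hω ⊢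
      linarith
    have hiUnion : (⋃ n : ℕ, {ω | v + 1 / (n + 1 : ℝ) ≤ X ω}) = {ω | v < X ω} := by
      ext ω
      simp only [mem_iUnion, mem_setOf_eq]
      constructor
      · rintro ⟨n, hn⟩
        have : (0 : ℝ) < 1 / (n + 1) := by positivity
        linarith
      · intro h
        obtain ⟨n, hn⟩ := exists_nat_one_div_lt (sub_pos.2 h)
        exact ⟨n, by linarith⟩
    have htend : Tendsto (fun n : ℕ => P {ω | v + 1 / (n + 1 : ℝ) ≤ X ω}) atTop
        (nhds (P {ω | v < X ω})) := by
      have := tendsto_measure_iUnion_atTop (μ := P)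
        (s := fun n : ℕ => {ω | v + 1 / (n + 1 : ℝ) ≤ X ω}) hmon
      simp only [Function.comp_def] at this
      rwa [hiUnion] at this
    have hle : P {ω | v < X ω} ≤ ENNReal.ofReal α := by
      refine le_of_tendsto' htend fun n => ?_
      have hpos : (0 : ℝ) < 1 / (n + 1 : ℝ) := by positivity
      obtain ⟨a, haS, halt⟩ := exists_lt_of_csInf_lt hSne
        (show sInf S < v + 1 / (n + 1 : ℝ) by rw [← hv]; linarith)
      have hmem := hSup a haS _ halt.le
      simp only [hSdef, mem_setOf_eq] at hmem
      exact (ENNReal.le_ofReal_iff_toReal_le (measure_ne_top P _) hα0.le).2 hmem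
    calc (P {ω | v < X ω}).toReal ≤ (ENNReal.ofReal α).toReal :=
        ENNReal.toReal_mono ENNReal.ofReal_ne_top hle
      _ = α := ENNReal.toReal_ofReal hα0.le
  -- integrability
  have hint : ∀ z : ℝ, Integrable (fun ω => max (X ω - z) 0) P := fun z =>
    (hX.sub (integrable_const z)).pos_part
  set I : ℝ → ℝ := fun z => ∫ ω, max (X ω - z) 0 ∂P with hI
  -- key estimate 1: for v ≤ b
  have key1 : ∀ b : ℝ, v ≤ b →
      I v - I b ≤ (b - v) * (P {ω | v < X ω}).toReal := by
    intro b hb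
    have hmeas' : MeasurableSet {ω | v < X ω} := hm measurableSet_Ioi
    have hptwise : ∀ ω, max (X ω - v) 0 - max (X ω - b) 0 ≤
        ({ω | v < X ω}).indicator (fun _ => b - v) ω := by
      intro ω
      rw [Set.indicator_apply]
      split_ifs with h
      · simp only [mem_setOf_eq] at h
        have e1 : max (X ω - v) 0 = X ω - v := max_eq_left (by linarith)
        have e2 : X ω - b ≤ max (X ω - b) 0 := le_max_left _ _
        linarith
      · simp only [mem_setOf_eq, not_lt] at h
        have e1 : max (X ω - v) 0 = 0 := max_eq_right (by linarith)
        have e2 : (0 : ℝ) ≤ max (X ω - b) 0 := le_max_right _ _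
        linarith
    calc I v - I b = ∫ ω, (max (X ω - v) 0 - max (X ω - b) 0) ∂P :=
          (integral_sub (hint v) (hint b)).symm
      _ ≤ ∫ ω, ({ω | v < X ω}).indicator (fun _ => b - v) ω ∂P :=
          integral_mono ((hint v).sub (hint b))
            ((integrable_const (b - v)).indicator hmeas') hptwise
      _ = (b - v) * (P {ω | v < X ω}).toReal := by
          rw [integral_indicator_const (b - v) hmeas', smul_eq_mul, mul_comm, measureReal_def]
  -- key estimate 2: for a ≤ v
  have key2 : ∀ a : ℝ, a ≤ v →
      (v - a) * (P {ω | v ≤ X ω}).toReal ≤ I a - I v := by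
    intro a ha
    have hmeas' : MeasurableSet {ω | v ≤ X ω} := hmeas v
    have hptwise : ∀ ω, ({ω | v ≤ X ω}).indicator (fun _ => v - a) ω ≤
        max (X ω - a) 0 - max (X ω - v) 0 := by
      intro ω
      rw [Set.indicator_apply]
      split_ifs with h
      · simp only [mem_setOf_eq] at h
        have e1 : max (X ω - a) 0 = X ω - a := max_eq_left (by linarith)
        have e2 : max (X ω - v) 0 = X ω - v := max_eq_left (by linarith)
        linarith
      · simp only [mem_setOf_eq, not_le] at h
        have e1 : (0 : ℝ) ≤ max (X ω - a) 0 := le_max_right _ _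
        have e2 : max (X ω - v) 0 = 0 := max_eq_right (by linarith)
        linarith
    calc (v - a) * (P {ω | v ≤ X ω}).toReal
        = ∫ ω, ({ω | v ≤ X ω}).indicator (fun _ => v - a) ω ∂P := by
          rw [integral_indicator_const (v - a) hmeas', smul_eq_mul, mul_comm, measureReal_def]
      _ ≤ ∫ ω, (max (X ω - a) 0 - max (X ω - v) 0) ∂P :=
          integral_mono ((integrable_const (v - a)).indicator hmeas')
            ((hint a).sub (hint v)) hptwise
      _ = I a - I v := integral_sub (hint a) (hint v)
  -- the minimum property
  have hmin : ∀ z : ℝ, v + (1 / α) * I v ≤ z + (1 / α) * I z := by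
    intro z
    rcases le_total z v with hz | hz
    · have hk := key2 z hz
      have ht1 := h1
      have hmul : α * (v - z) ≤ (P {ω | v ≤ X ω}).toReal * (v - z) :=
        mul_le_mul_of_nonneg_right ht1 (by linarith)
      have hIe : α * (v - z) ≤ I z - I v := by nlinarith
      have h' : α * (v + (1 / α) * I v) ≤ α * (z + (1 / α) * I z) := by
        field_simp
        nlinarith
      exact le_of_mul_le_mul_left h' hα0
    · have hk := key1 z hz
      have ht2 := h2
      have hmul : (P {ω | v < X ω}).toReal * (z - v) ≤ α * (z - v) :=
        mul_le_mul_of_nonneg_right ht2 (by linarith)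
      have hIe : I v - I z ≤ α * (z - v) := by nlinarith
      have h' : α * (v + (1 / α) * I v) ≤ α * (z + (1 / α) * I z) := by
        field_simp
        nlinarith
      exact le_of_mul_le_mul_left h' hα0
  -- conclusion
  have hmem : v + (1 / α) * I v ∈
      {w : ℝ | ∃ z : ℝ, w = z + (1 / α) * ∫ ω, max (X ω - z) 0 ∂P} := ⟨v, rfl⟩
  have hlb : ∀ w ∈ {w : ℝ | ∃ z : ℝ, w = z + (1 / α) * ∫ ω, max (X ω - z) 0 ∂P},
      v + (1 / α) * I v ≤ w := by
    rintro w ⟨z, rfl⟩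
    exact hmin z
  rw [hvdef]
  exact le_antisymm (le_csInf ⟨_, hmem⟩ hlb) (csInf_le ⟨_, hlb⟩ hmem)

end aux

/-- The Rockafellar–Uryasev infimum `inf_z { z + (1/α) E[(X - z)₊] }` is attained at
`z* = VaR_{1-α}(X)`. -/
theorem rockafellar_uryasev_inf_attained_at_var
    {Ω : Type*} [MeasurableSpace Ω] (P : Measure Ω) [IsProbabilityMeasure P]
    (X : Ω → ℝ) (hX : Integrable X P) (α : ℝ) (hα : α ∈ Set.Ioo (0 : ℝ) 1) :
    valueAtRisk P X α + (1 / α) * ∫ ω, max (X ω - valueAtRisk P X α) 0 ∂P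
      = sInf {v : ℝ | ∃ z : ℝ, v = z + (1 / α) * ∫ ω, max (X ω - z) 0 ∂P} := by
  obtain ⟨Y, hYm, hXY⟩ := hX.aestronglyMeasurable
  have hY : Integrable Y P := hX.congr hXY
  have hVaR : valueAtRisk P X α = valueAtRisk P Y α := by
    unfold valueAtRisk
    congr 1
    ext z
    simp only [mem_setOf_eq]
    rw [measure_congr (show {ω | z ≤ X ω} =ᵐ[P] {ω | z ≤ Y ω} from
      Filter.eventuallyEq_set.2 (hXY.mono fun ω hω => by
        simp only [mem_setOf_eq, hω]))]
  have hIeq : ∀ z : ℝ, (∫ ω, max (X ω - z) 0 ∂P) = ∫ ω, max (Y ω - z) 0 ∂P := fun z =>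
    integral_congr_ae (hXY.mono fun ω hω => by simp only [hω])
  rw [hVaR]
  simp only [hIeq]
  exact RU_main Y hYm.measurable hY α hα
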